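/- Let F be a monic real polynomial of degree n ≥ 2 (viewed as a smooth function on an open interval I ⊆ ℝ) and let x be a smooth function on I satisfying Op_n[F]x = 0. Define b_k(a) = ∑_{s=1}^{k} F^{(k-s)}(a)/(k-s)! · x^{(s)}(a)/(1/2)_s for 1 ≤ k ≤ n. Then on I: b₁ = 2 F x′; b_k′ = (k + 1/2) b_{k+1} − (F^{(k)}/k!) x′ for 1 ≤ k ≤ n−1; and b_n′ = −x′. -/

import Mathlib

open Polynomial

/-- The Pochhammer symbol `(1/2)_s`. -/
noncomputable def poch (s : ℕ) : ℝ := (ascPochhammer ℝ s).eval (1/2 : ℝ)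

/-- The operator `Op_n[F]` acting on `h`, with derivatives taken within the set `I`. -/
noncomputable def OpW (I : Set ℝ) (n : ℕ) (F h : ℝ → ℝ) (a : ℝ) : ℝ :=
  ∑ s ∈ Finset.range (n + 1),
    iteratedDerivWithin (n - s) F I a / (Nat.factorial (n - s) : ℝ) *
      (iteratedDerivWithin s h I a / poch s)

/-- The coefficient `b_k(a) = ∑_{s=1}^{k} F^{(k-s)}(a)/(k-s)! · x^{(s)}(a)/(1/2)_s`,
with derivatives taken within the set `I`. -/
noncomputable def bfun (I : Set ℝ) (F x : ℝ → ℝ) (k : ℕ) (a : ℝ) : ℝ :=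
  ∑ s ∈ Finset.Icc 1 k,
    iteratedDerivWithin (k - s) F I a / (Nat.factorial (k - s) : ℝ) *
      (iteratedDerivWithin s x I a / poch s)

/- ### Auxiliary lemmas -/

lemma poch_zero : poch 0 = 1 := by simp [poch]

lemma poch_succ (s : ℕ) : poch (s + 1) = poch s * ((s : ℝ) + 1/2) := by
  rw [poch, poch, ascPochhammer_succ_right]
  simp only [eval_mul, eval_add, eval_X, eval_natCast]
  ring

lemma poch_one : poch 1 = 1/2 := by
  rw [show poch 1 = poch (0 + 1) from rfl, poch_succ, poch_zero]
  norm_num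

lemma poch_pos (s : ℕ) : 0 < poch s := by
  induction s with
  | zero => simp [poch_zero]
  | succ m ih => rw [poch_succ]; positivity

lemma shift (m : ℕ) (h : ℕ → ℝ) :
    ∑ s ∈ Finset.Icc 1 m, h s = ∑ t ∈ Finset.range m, h (t + 1) := by
  rw [← Finset.Ico_add_one_right_eq_Icc, Finset.sum_Ico_eq_sum_range]
  simp [add_comm]

lemma key (k : ℕ) (Fd xd : ℕ → ℝ) :
    (∑ s ∈ Finset.Icc 1 k,
      (Fd (k - s + 1) / (Nat.factorial (k - s) : ℝ) * (xd s / poch s) +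
        Fd (k - s) / (Nat.factorial (k - s) : ℝ) * (xd (s + 1) / poch s))) =
    ((k : ℝ) + 1/2) *
        (∑ s ∈ Finset.Icc 1 (k + 1),
          Fd (k + 1 - s) / (Nat.factorial (k + 1 - s) : ℝ) * (xd s / poch s)) -
      Fd k / (Nat.factorial k : ℝ) * xd 1 := by
  have h2 : ((k : ℝ) + 1/2) *
        (∑ s ∈ Finset.Icc 1 (k + 1),
          Fd (k + 1 - s) / (Nat.factorial (k + 1 - s) : ℝ) * (xd s / poch s)) =
      ∑ t ∈ Finset.range (k + 1),
        (((k - t : ℕ) : ℝ) * (Fd (k - t) / (Nat.factorial (k - t) : ℝ) * (xd (t + 1) / poch (t + 1)))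
          + Fd (k - t) / (Nat.factorial (k - t) : ℝ) * (xd (t + 1) / poch t)) := by
    rw [Finset.mul_sum, shift (k + 1)]
    refine Finset.sum_congr rfl fun t ht => ?_
    have htk : t ≤ k := by
      have := Finset.mem_range.mp ht; omega
    have hc : ((k - t : ℕ) : ℝ) = (k : ℝ) - t := by
      rw [Nat.cast_sub htk]
    have hp0 : poch t ≠ 0 := (poch_pos t).ne'
    have hpt : ((t : ℝ) + 1/2) ≠ 0 := by positivity
    simp only [Nat.add_sub_add_right]
    rw [hc, poch_succ]
    field_simp
    ring
  rw [h2, shift k, Finset.sum_add_distrib, Finset.sum_add_distrib,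
    Finset.sum_range_succ, Finset.sum_range_succ']
  simp only [Nat.sub_self, Nat.cast_zero, zero_mul, add_zero, Nat.sub_zero, poch_zero, div_one]
  have e1 : ∑ t ∈ Finset.range k,
      Fd (k - (t + 1) + 1) / (Nat.factorial (k - (t + 1)) : ℝ) * (xd (t + 1) / poch (t + 1)) =
      ∑ t ∈ Finset.range k,
        ((k - t : ℕ) : ℝ) * (Fd (k - t) / (Nat.factorial (k - t) : ℝ) * (xd (t + 1) / poch (t + 1))) := by
    refine Finset.sum_congr rfl fun t ht => ?_
    have htk : t < k := Finset.mem_range.mp ht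
    obtain ⟨m, hm⟩ : ∃ m, k - (t + 1) = m := ⟨_, rfl⟩
    have hm2 : k - t = m + 1 := by omega
    rw [hm, hm2, Nat.factorial_succ]
    have hfac : ((Nat.factorial m : ℝ)) ≠ 0 := Nat.cast_ne_zero.mpr (Nat.factorial_ne_zero m)
    have hp1 : poch (t + 1) ≠ 0 := (poch_pos _).ne'
    have hm1 : ((m : ℝ) + 1) ≠ 0 := by positivity
    push_cast
    field_simp
  rw [e1]
  ring

lemma contDiff_polyeval (p : Polynomial ℝ) : ContDiff ℝ (⊤ : ℕ∞) fun t => p.eval t := by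
  induction p using Polynomial.induction_on' with
  | add p q hp hq => simpa [eval_add] using hp.add hq
  | monomial n a => simpa [eval_monomial] using (contDiff_const (c := a)).mul (contDiff_id.pow n)

lemma iterWithin_poly {I : Set ℝ} (hIopen : IsOpen I) (p : Polynomial ℝ) (m : ℕ) :
    ∀ a ∈ I, iteratedDerivWithin m (fun t => p.eval t) I a = (derivative^[m] p).eval a := by
  induction m with
  | zero => intro a _; simp [iteratedDerivWithin_zero]
  | succ m ih =>
    intro a ha
    have hu : UniqueDiffWithinAt ℝ I a := hIopen.uniqueDiffOn a ha
    rw [iteratedDerivWithin_succ, derivWithin_congr (fun b hb => ih b hb) (ih a ha),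
      (derivative^[m] p).derivWithin hu, Function.iterate_succ_apply']

lemma hasDerivWithinAt_iter {I : Set ℝ} (hIopen : IsOpen I) {g : ℝ → ℝ}
    (hg : ContDiffOn ℝ (⊤ : ℕ∞) g I) (m : ℕ) {a : ℝ} (ha : a ∈ I) :
    HasDerivWithinAt (iteratedDerivWithin m g I) (iteratedDerivWithin (m + 1) g I a) I a := by
  have hu : UniqueDiffOn ℝ I := hIopen.uniqueDiffOn
  have hmn : (m : WithTop ℕ∞) < ((⊤ : ℕ∞) : WithTop ℕ∞) := by
    exact_mod_cast WithTop.coe_lt_top m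
  have hd : DifferentiableWithinAt ℝ (iteratedDerivWithin m g I) I a :=
    (hg.differentiableOn_iteratedDerivWithin hmn hu) a ha
  have h := hd.hasDerivWithinAt
  rwa [← iteratedDerivWithin_succ] at h

lemma hasDeriv_b {I : Set ℝ} (hIopen : IsOpen I) {f x : ℝ → ℝ}
    (hf : ContDiffOn ℝ (⊤ : ℕ∞) f I) (hx : ContDiffOn ℝ (⊤ : ℕ∞) x I) (k : ℕ) {a : ℝ}
    (ha : a ∈ I) :
    HasDerivWithinAt (bfun I f x k)
      (∑ s ∈ Finset.Icc 1 k,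
        (iteratedDerivWithin (k - s + 1) f I a / (Nat.factorial (k - s) : ℝ) *
            (iteratedDerivWithin s x I a / poch s) +
          iteratedDerivWithin (k - s) f I a / (Nat.factorial (k - s) : ℝ) *
            (iteratedDerivWithin (s + 1) x I a / poch s))) I a := by
  show HasDerivWithinAt
    (fun a => ∑ s ∈ Finset.Icc 1 k,
      iteratedDerivWithin (k - s) f I a / (Nat.factorial (k - s) : ℝ) *
        (iteratedDerivWithin s x I a / poch s)) _ I a
  refine HasDerivWithinAt.fun_sum fun s _ => ?_
  exact ((hasDerivWithinAt_iter hIopen hf (k - s) ha).div_const _).mul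
    ((hasDerivWithinAt_iter hIopen hx s ha).div_const _)

lemma iterF_eq_fact {n : ℕ} (F : Polynomial ℝ) (hmonic : F.Monic) (hdeg : F.natDegree = n) :
    derivative^[n] F = C ((Nat.factorial n : ℝ)) := by
  have h1 : (derivative^[n] F).natDegree ≤ 0 := by
    have := Polynomial.natDegree_iterate_derivative F n
    omega
  rw [Polynomial.eq_C_of_natDegree_le_zero h1, Polynomial.coeff_iterate_derivative]
  have hc : F.coeff (0 + n) = 1 := by
    simpa [hdeg] using hmonic.coeff_natDegree
  rw [hc]
  simp [Nat.descFactorial_self]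

/-- Let `F` be a monic real polynomial of degree `n ≥ 2` and `x` a smooth
function on an open interval `I` with `Op_n[F]x = 0` on `I`. Then on `I`: `b₁ = 2 F x′`;
`b_k′ = (k + 1/2) b_{k+1} − (F^{(k)}/k!) x′` for `1 ≤ k ≤ n−1`; and `b_n′ = −x′`. -/
theorem stmt5 (n : ℕ) (hn : 2 ≤ n) (F : Polynomial ℝ) (hmonic : F.Monic)
    (hdeg : F.natDegree = n)
    (I : Set ℝ) (hIopen : IsOpen I) (hIconn : I.OrdConnected)
    (x : ℝ → ℝ) (hx : ContDiffOn ℝ (⊤ : ℕ∞) x I)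
    (hode : ∀ a ∈ I, OpW I n (fun t => F.eval t) x a = 0) :
    (∀ a ∈ I, bfun I (fun t => F.eval t) x 1 a = 2 * F.eval a * derivWithin x I a) ∧
    (∀ k : ℕ, 1 ≤ k → k ≤ n - 1 → ∀ a ∈ I,
      derivWithin (bfun I (fun t => F.eval t) x k) I a =
        ((k : ℝ) + 1/2) * bfun I (fun t => F.eval t) x (k + 1) a -
          iteratedDerivWithin k (fun t => F.eval t) I a / (Nat.factorial k : ℝ) *
            derivWithin x I a) ∧
    (∀ a ∈ I, derivWithin (bfun I (fun t => F.eval t) x n) I a = - derivWithin x I a) := by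
  have hu : UniqueDiffOn ℝ I := hIopen.uniqueDiffOn
  have hf : ContDiffOn ℝ (⊤ : ℕ∞) (fun t => F.eval t) I := (contDiff_polyeval F).contDiffOn
  refine ⟨?_, ?_, ?_⟩
  · -- b₁ = 2 F x'
    intro a ha
    rw [bfun, Finset.Icc_self, Finset.sum_singleton, iteratedDerivWithin_one]
    simp only [Nat.sub_self, iteratedDerivWithin_zero, Nat.factorial_zero, Nat.cast_one,
      div_one, poch_one]
    ring
  · -- recursion for b_k'
    intro k _ _ a ha
    rw [(hasDeriv_b hIopen hf hx k ha).derivWithin (hu a ha),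
      key k (fun m => iteratedDerivWithin m (fun t => F.eval t) I a)
        (fun s => iteratedDerivWithin s x I a),
      iteratedDerivWithin_one]
    rfl
  · -- b_n' = -x'
    have hb : ∀ b ∈ I, bfun I (fun t => F.eval t) x n b = - x b := by
      intro b hbI
      have h0 := hode b hbI
      rw [OpW, Finset.sum_range_succ'] at h0
      have hlast : iteratedDerivWithin (n - 0) (fun t => F.eval t) I b /
          (Nat.factorial (n - 0) : ℝ) * (iteratedDerivWithin 0 x I b / poch 0) = x b := by
        have hfn : ((Nat.factorial n : ℝ)) ≠ 0 := Nat.cast_ne_zero.mpr (Nat.factorial_ne_zero n)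
        rw [Nat.sub_zero, iterWithin_poly hIopen F n b hbI, iterF_eq_fact F hmonic hdeg]
        simp [iteratedDerivWithin_zero, poch_zero, eval_C, div_self hfn]
      rw [hlast] at h0
      rw [bfun, shift n]
      linarith
    intro a ha
    have hxd : DifferentiableWithinAt ℝ x I a :=
      (hx.differentiableOn (by simp)) a ha
    rw [derivWithin_congr (fun b hbI => hb b hbI) (hb a ha)]
    exact (hxd.hasDerivWithinAt.neg).derivWithin (hu a ha)
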